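/- Let ℓ, w be positive integers with w ≥ ℓ + 1, let A = [0,ℓ] ∪ {w}, and suppose h ≥ w/ℓ. Set j₀ = ⌊h + 1 - w/ℓ⌋. Then |hA| = j₀·w + 1 + (h - j₀)(2 + ℓ(h - j₀ + 1))/2. -/

import Mathlib

open Pointwise

/-- The h-fold sumset of a finite set of integers. -/
def hfold (A : Finset ℤ) : ℕ → Finset ℤ
  | 0 => {0}
  | n + 1 => A + hfold A n

namespace Stmt7Aux

lemma IccAddIcc (a b c d : ℤ) (h1 : a ≤ b) (h2 : c ≤ d) :
    Finset.Icc a b + Finset.Icc c d = Finset.Icc (a + c) (b + d) := by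
  ext x
  simp only [Finset.mem_add, Finset.mem_Icc]
  constructor
  · rintro ⟨y, hy, z, hz, rfl⟩; omega
  · intro hx
    exact ⟨max a (x - d), by omega, x - max a (x - d), by omega, by omega⟩

lemma addBiUnion (s t : Finset ℤ) (f : ℤ → Finset ℤ) :
    s + t.biUnion f = t.biUnion fun j => s + f j := by
  ext x
  simp only [Finset.mem_add, Finset.mem_biUnion]
  constructor
  · rintro ⟨y, hy, z, ⟨j, hj, hz⟩, rfl⟩
    exact ⟨j, hj, y, hy, z, hz, rfl⟩
  · rintro ⟨j, hj, y, hy, z, hz, rfl⟩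
    exact ⟨y, hy, z, ⟨j, hj, hz⟩, rfl⟩

lemma biUnionUnion (s t : Finset ℤ) (f : ℤ → Finset ℤ) :
    (s ∪ t).biUnion f = s.biUnion f ∪ t.biUnion f := by
  ext x
  simp only [Finset.mem_biUnion, Finset.mem_union]
  constructor
  · rintro ⟨j, hj | hj, hx⟩
    exacts [Or.inl ⟨j, hj, hx⟩, Or.inr ⟨j, hj, hx⟩]
  · rintro (⟨j, hj, hx⟩ | ⟨j, hj, hx⟩)
    exacts [⟨j, Or.inl hj, hx⟩, ⟨j, Or.inr hj, hx⟩]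

lemma lastUnion (G : ℤ → Finset ℤ) (n : ℤ) (hn : 0 ≤ n) :
    (Finset.Icc 0 n).biUnion G ∪ (Finset.Icc 0 n).biUnion (fun j => G (j + 1)) =
      (Finset.Icc 0 (n + 1)).biUnion G := by
  ext x
  simp only [Finset.mem_union, Finset.mem_biUnion, Finset.mem_Icc]
  constructor
  · rintro (⟨j, hj, hx⟩ | ⟨j, hj, hx⟩)
    exacts [⟨j, by omega, hx⟩, ⟨j + 1, by omega, hx⟩]
  · rintro ⟨j, hj, hx⟩
    rcases le_or_gt j n with hle | hlt
    · exact Or.inl ⟨j, ⟨hj.1, hle⟩, hx⟩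
    · refine Or.inr ⟨j - 1, by omega, ?_⟩
      have : j - 1 + 1 = j := by ring
      rw [this]; exact hx

lemma struct (l w : ℤ) (hl : 0 ≤ l) : ∀ n : ℕ,
    hfold (Finset.Icc 0 l ∪ {w}) n =
      (Finset.Icc (0 : ℤ) (n : ℤ)).biUnion
        (fun j => Finset.Icc (j * w) (j * w + ((n : ℤ) - j) * l)) := by
  intro n
  induction n with
  | zero =>
    simp [hfold]
  | succ n ih =>
    have hcast : ((n + 1 : ℕ) : ℤ) = (n : ℤ) + 1 := by push_cast; ring
    rw [hfold, ih, Finset.union_add, addBiUnion, addBiUnion, hcast]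
    have A1 : ∀ j ∈ Finset.Icc (0 : ℤ) (n : ℤ),
        Finset.Icc 0 l + Finset.Icc (j * w) (j * w + ((n : ℤ) - j) * l) =
          Finset.Icc (j * w) (j * w + ((n : ℤ) + 1 - j) * l) := by
      intro j hj
      simp only [Finset.mem_Icc] at hj
      rw [IccAddIcc _ _ _ _ hl (by nlinarith [mul_nonneg (by omega : (0:ℤ) ≤ (n : ℤ) - j) hl])]
      congr 1 <;> ring
    have A2 : ∀ j ∈ Finset.Icc (0 : ℤ) (n : ℤ),
        {w} + Finset.Icc (j * w) (j * w + ((n : ℤ) - j) * l) =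
          Finset.Icc ((j + 1) * w) ((j + 1) * w + ((n : ℤ) + 1 - (j + 1)) * l) := by
      intro j hj
      simp only [Finset.mem_Icc] at hj
      rw [← Finset.Icc_self w,
        IccAddIcc _ _ _ _ le_rfl (by nlinarith [mul_nonneg (by omega : (0:ℤ) ≤ (n : ℤ) - j) hl])]
      congr 1 <;> ring
    rw [Finset.biUnion_congr rfl A1, Finset.biUnion_congr rfl A2]
    exact lastUnion
      (fun j => Finset.Icc (j * w) (j * w + ((n : ℤ) + 1 - j) * l)) (n : ℤ)
      (by positivity)

lemma unionStep (a b l w : ℤ) (ha : 0 ≤ a) (hl : 0 ≤ l) (hlw : l ≤ w) (hwb : w ≤ b + l) (hb : 0 ≤ b) :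
    Finset.Icc 0 (a + (b + l)) ∪ Finset.Icc (a + w) (a + w + b) =
      Finset.Icc 0 (a + w + b) := by
  ext x
  simp only [Finset.mem_union, Finset.mem_Icc]
  omega

lemma merge (l w h : ℤ) (hl : 0 < l) (hlw : l ≤ w) (k : ℤ) (hk : 0 ≤ k) :
    w ≤ (h - k + 1) * l → k ≤ h →
    (Finset.Icc 0 k).biUnion (fun j => Finset.Icc (j * w) (j * w + (h - j) * l)) =
      Finset.Icc 0 (k * w + (h - k) * l) := by
  refine Int.le_induction (motive := fun k _ => w ≤ (h - k + 1) * l → k ≤ h →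
      (Finset.Icc 0 k).biUnion (fun j => Finset.Icc (j * w) (j * w + (h - j) * l)) =
        Finset.Icc 0 (k * w + (h - k) * l)) ?_ ?_ k hk
  · intro _ _
    simp
  · intro k hk ih hwk hkh
    have hIcc : Finset.Icc (0 : ℤ) (k + 1) = insert (k + 1) (Finset.Icc 0 k) := by
      ext x
      simp only [Finset.mem_insert, Finset.mem_Icc]
      omega
    have r1 : (h - k + 1) * l = (h - (k + 1) + 1) * l + l := by ring
    have r2 : (h - (k + 1) + 1) * l = (h - (k + 1)) * l + l := by ring
    rw [hIcc, Finset.biUnion_insert, ih (by linarith) (by omega), Finset.union_comm]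
    have e1 : k * w + (h - k) * l = k * w + ((h - (k + 1)) * l + l) := by ring
    have e2 : (k + 1) * w = k * w + w := by ring
    rw [e1, e2]
    exact unionStep (k * w) ((h - (k + 1)) * l) l w
      (mul_nonneg hk (by linarith)) (by linarith) hlw
      (by linarith) (mul_nonneg (by omega) (by omega))

lemma gaussQ (m : ℕ) : (∑ k ∈ Finset.range m, (k : ℚ)) = m * (m - 1) / 2 := by
  induction m with
  | zero => simp
  | succ n ih =>
    rw [Finset.sum_range_succ, ih]
    push_cast
    ring

end Stmt7Aux

open Stmt7Aux in
theorem stmt_7 (l w h : ℕ) (hl : 0 < l) (hw : l + 1 ≤ w) (hh : 0 < h)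
    (hbig : (w : ℚ) / l ≤ (h : ℚ))
    (j0 : ℤ) (hj0 : j0 = ⌊(h : ℚ) + 1 - (w : ℚ) / l⌋) :
    ((hfold (Finset.Icc (0 : ℤ) l ∪ {(w : ℤ)}) h).card : ℚ) =
      j0 * w + 1 + ((h : ℚ) - j0) * (2 + l * ((h : ℚ) - j0 + 1)) / 2 := by
  have hlq : (0 : ℚ) < l := by exact_mod_cast hl
  -- floor inequalities
  have f1 : (j0 : ℚ) ≤ (h : ℚ) + 1 - (w : ℚ) / l := hj0 ▸ Int.floor_le _
  have f2 : (h : ℚ) + 1 - (w : ℚ) / l < j0 + 1 := hj0 ▸ Int.lt_floor_add_one _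
  have key1Q : (w : ℚ) ≤ ((h : ℚ) - j0 + 1) * l := by
    rw [← div_le_iff₀ hlq]; linarith
  have key2Q : ((h : ℚ) - j0) * l < (w : ℚ) := by
    rw [← lt_div_iff₀ hlq]; linarith
  have key1 : (w : ℤ) ≤ ((h : ℤ) - j0 + 1) * l := by exact_mod_cast key1Q
  have key2 : ((h : ℤ) - j0) * l < (w : ℤ) := by exact_mod_cast key2Q
  have hj0ge : 1 ≤ j0 := by
    rw [hj0]
    rw [Int.le_floor]
    push_cast
    linarith
  have hj0le : j0 ≤ (h : ℤ) - 1 := by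
    by_contra hc
    push_neg at hc
    have h1 : (h : ℤ) - j0 + 1 ≤ 1 := by omega
    have h2 : ((h : ℤ) - j0 + 1) * l ≤ 1 * l :=
      mul_le_mul_of_nonneg_right h1 (by positivity)
    have : (l : ℤ) + 1 ≤ w := by exact_mod_cast hw
    linarith
  have hlwZ : (l : ℤ) ≤ (w : ℤ) := by exact_mod_cast Nat.le_of_succ_le hw
  have hlZ : (0 : ℤ) < l := by exact_mod_cast hl
  set G : ℤ → Finset ℤ := fun j => Finset.Icc (j * w) (j * w + ((h : ℤ) - j) * l) with hG
  -- structure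
  have hstruct : hfold (Finset.Icc (0 : ℤ) l ∪ {(w : ℤ)}) h =
      (Finset.Icc (0 : ℤ) (h : ℤ)).biUnion G := struct (l : ℤ) (w : ℤ) (by positivity) h
  have hsplit : Finset.Icc (0 : ℤ) (h : ℤ) =
      Finset.Icc 0 j0 ∪ Finset.Icc (j0 + 1) (h : ℤ) := by
    ext x
    simp only [Finset.mem_union, Finset.mem_Icc]
    omega
  have hmerge : (Finset.Icc 0 j0).biUnion G =
      Finset.Icc 0 (j0 * w + ((h : ℤ) - j0) * l) :=
    merge (l : ℤ) (w : ℤ) (h : ℤ) hlZ hlwZ j0 (by omega) key1 (by omega)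
  have hdis1 : Disjoint (Finset.Icc (0 : ℤ) (j0 * w + ((h : ℤ) - j0) * l))
      ((Finset.Icc (j0 + 1) (h : ℤ)).biUnion G) := by
    rw [Finset.disjoint_biUnion_right]
    intro j hj
    simp only [Finset.mem_Icc] at hj
    rw [Finset.disjoint_left]
    intro x hx hx'
    simp only [hG, Finset.mem_Icc] at hx hx'
    have h1 : (j0 + 1) * (w : ℤ) ≤ j * w :=
      mul_le_mul_of_nonneg_right (by omega) (by positivity)
    have e : (j0 + 1) * (w : ℤ) = j0 * w + w := by ring
    linarith [hx.2, hx'.1]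
  have hpairKey : ∀ i j : ℤ, j0 + 1 ≤ i → i < j → j ≤ (h : ℤ) →
      Disjoint (G i) (G j) := by
    intro i j hi hij hjh
    rw [Finset.disjoint_left]
    intro x hx hx'
    simp only [hG, Finset.mem_Icc] at hx hx'
    have h1 : (i + 1) * (w : ℤ) ≤ j * w :=
      mul_le_mul_of_nonneg_right (by omega) (by positivity)
    have h2 : ((h : ℤ) - i) * l ≤ ((h : ℤ) - j0 - 1) * l :=
      mul_le_mul_of_nonneg_right (by omega) (by positivity)
    have e1 : (i + 1) * (w : ℤ) = i * w + w := by ring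
    have e2 : ((h : ℤ) - j0 - 1) * l = ((h : ℤ) - j0) * l - l := by ring
    linarith [hx.2, hx'.1]
  have hpair : ∀ i ∈ Finset.Icc (j0 + 1) (h : ℤ), ∀ j ∈ Finset.Icc (j0 + 1) (h : ℤ),
      i ≠ j → Disjoint (G i) (G j) := by
    intro i hi j hj hne
    simp only [Finset.mem_Icc] at hi hj
    rcases lt_or_gt_of_ne hne with hlt | hgt
    · exact hpairKey i j hi.1 hlt hj.2
    · exact (hpairKey j i hj.1 hgt hi.2).symm
  -- cardinalities
  have hcard : (hfold (Finset.Icc (0 : ℤ) l ∪ {(w : ℤ)}) h).card =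
      (Finset.Icc (0 : ℤ) (j0 * w + ((h : ℤ) - j0) * l)).card +
        ∑ j ∈ Finset.Icc (j0 + 1) (h : ℤ), (G j).card := by
    rw [hstruct, hsplit, biUnionUnion, hmerge,
      Finset.card_union_of_disjoint hdis1, Finset.card_biUnion hpair]
  -- head card
  have hheadnn : (0 : ℤ) ≤ j0 * w + ((h : ℤ) - j0) * l := by
    have := mul_nonneg (by omega : (0:ℤ) ≤ j0) (by positivity : (0:ℤ) ≤ (w:ℤ))
    have := mul_nonneg (by omega : (0:ℤ) ≤ (h:ℤ) - j0) (by positivity : (0:ℤ) ≤ (l:ℤ))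
    linarith
  have toNatQ : ∀ z : ℤ, 0 ≤ z → ((z.toNat : ℕ) : ℚ) = (z : ℚ) := by
    intro z hz
    exact_mod_cast congrArg (fun y : ℤ => (y : ℚ)) (Int.toNat_of_nonneg hz)
  have hheadQ : ((Finset.Icc (0 : ℤ) (j0 * w + ((h : ℤ) - j0) * l)).card : ℚ) =
      (j0 : ℚ) * w + ((h : ℚ) - j0) * l + 1 := by
    rw [Int.card_Icc,
      show j0 * (w : ℤ) + ((h : ℤ) - j0) * l + 1 - 0 =
        j0 * w + ((h : ℤ) - j0) * l + 1 from by ring,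
      toNatQ _ (by omega)]
    push_cast
    ring
  -- reindex tail sum
  set m : ℕ := ((h : ℤ) - j0).toNat with hmdef
  have hm : (m : ℤ) = (h : ℤ) - j0 := Int.toNat_of_nonneg (by omega)
  have hmap : Finset.Icc (j0 + 1) (h : ℤ) =
      (Finset.range m).map ⟨fun k : ℕ => (h : ℤ) - k, id (α := Function.Injective (fun k : ℕ => (h : ℤ) - k)) (by
        intro a b hab; simp only at hab; omega)⟩ := by
    ext x
    simp only [Finset.mem_map, Finset.mem_range, Finset.mem_Icc,
      Function.Embedding.coeFn_mk]
    constructor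
    · intro hx
      exact ⟨((h : ℤ) - x).toNat, by omega, by omega⟩
    · rintro ⟨a, ha, rfl⟩
      omega
  have hcardG : ∀ k ∈ Finset.range m, ((G ((h : ℤ) - (k : ℕ))).card : ℚ) = (k : ℚ) * l + 1 := by
    intro k hk
    simp only [Finset.mem_range] at hk
    simp only [hG]
    rw [Int.card_Icc]
    have e : ((h : ℤ) - k) * w + ((h : ℤ) - ((h : ℤ) - k)) * l + 1 - ((h : ℤ) - k) * w =
        (k : ℤ) * l + 1 := by ring
    rw [e, toNatQ _ (by positivity)]
    push_cast
    ring
  have htailQ : ((∑ j ∈ Finset.Icc (j0 + 1) (h : ℤ), (G j).card : ℕ) : ℚ) =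
      (l : ℚ) * ((m : ℚ) * ((m : ℚ) - 1) / 2) + m := by
    rw [hmap, Finset.sum_map]
    push_cast
    simp only [Function.Embedding.coeFn_mk]
    rw [Finset.sum_congr rfl hcardG, Finset.sum_add_distrib, Finset.sum_const,
      ← Finset.sum_mul, gaussQ m]
    simp only [Finset.card_range, nsmul_eq_mul, mul_one]
    ring
  have hmq : (m : ℚ) = (h : ℚ) - (j0 : ℚ) := by
    exact_mod_cast congrArg (fun z : ℤ => (z : ℚ)) hm
  push_cast at htailQ
  rw [hcard]
  push_cast
  rw [hheadQ, htailQ, hmq]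
  push_cast
  ring
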